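/- Let S_M and S_L be finite types. Let A : Ω → {0,1}, L : Ω → S_L, M : Ω → S_M and Y : Ω → ℝ be random variables with Y integrable. Let potential outcomes M₀ : Ω → S_M (representing M(0)), L₁ : Ω → S_L (representing L(1)) and, for each m ∈ S_M, Y₁ₘ : Ω → ℝ (representing Y(1,m)), each Y₁ₘ integrable, satisfy consistency: M(ω) = M₀(ω) whenever A(ω) = 0; L(ω) = L₁(ω) whenever A(ω) = 1; and Y(ω) = Y₁ₘ(ω) whenever A(ω) = 1 and M(ω) = m. Assume: (i) cross-world assumption: for every m, Y₁ₘ is independent of M₀; (ii) randomization: for every m, the triple ω ↦ (Y₁ₘ(ω), L₁(ω), M₀(ω)) is independent of A; (iii) for every m ∈ S_M and l ∈ S_L, conditionally on the event F_l = {A = 1, L = l}, Y₁ₘ is independent of M, i.e. for every measurable B ⊆ ℝ and m' ∈ S_M, P(Y₁ₘ ∈ B, M = m' | F_l) = P(Y₁ₘ ∈ B | F_l) · P(M = m' | F_l); (iv) positivity: P(A = 0) > 0 and P(A = 1, L = l, M = m) > 0 for all l ∈ S_L, m ∈ S_M; (v) the composed variable ω ↦ Y₁_{M₀(ω)}(ω)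 is integrable. Then E[ω ↦ Y₁_{M₀(ω)}(ω)] = Σ_{m ∈ S_M} ( Σ_{l ∈ S_L} E[Y | M = m, L = l, A = 1] · P(L = l | A = 1) ) · P(M = m | A = 0). -/

import Mathlib

open MeasureTheory ProbabilityTheory Set

section helpers

variable {Ω : Type*} [MeasurableSpace Ω]

private lemma setIntegral_of_indep (μ : Measure Ω) [IsProbabilityMeasure μ]
    {X : Ω → ℝ} (hXm : Measurable X) (hX : Integrable X μ)
    {S : Set Ω} (hS : MeasurableSet S)
    (h : ∀ B : Set ℝ, MeasurableSet B → μ (X ⁻¹' B ∩ S) = μ (X ⁻¹' B) * μ S) :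
    ∫ ω in S, X ω ∂μ = (∫ ω, X ω ∂μ) * (μ S).toReal := by
  classical
  set g : Ω → ℝ := S.indicator (fun _ => (1:ℝ)) with hg
  have hpre : ∀ T : Set ℝ, g ⁻¹' T =
      (if (1:ℝ) ∈ T then S else (∅ : Set Ω)) ∪ (if (0:ℝ) ∈ T then Sᶜ else ∅) := by
    intro T
    ext ω
    by_cases hω : ω ∈ S <;> by_cases h1 : (1:ℝ) ∈ T <;> by_cases h0 : (0:ℝ) ∈ T <;>
      simp [hg, Set.indicator_apply, hω, h1, h0]
  have hcompl : ∀ B : Set ℝ, MeasurableSet B →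
      μ (X ⁻¹' B ∩ Sᶜ) = μ (X ⁻¹' B) * μ Sᶜ := by
    intro B hB
    have h1 : μ (X ⁻¹' B ∩ S) + μ (X ⁻¹' B ∩ Sᶜ) = μ (X ⁻¹' B) := by
      rw [← Set.diff_eq]
      exact measure_inter_add_diff _ hS
    have h2 : μ (X ⁻¹' B ∩ S) + μ (X ⁻¹' B) * μ Sᶜ = μ (X ⁻¹' B) := by
      rw [h B hB, ← mul_add, measure_add_measure_compl hS, measure_univ, mul_one]
    exact WithTop.add_left_cancel (measure_ne_top _ _) (h1.trans h2.symm)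
  have hind : IndepFun X g μ := by
    rw [indepFun_iff_measure_inter_preimage_eq_mul]
    intro B T hB hT
    rw [hpre T]
    by_cases h1 : (1:ℝ) ∈ T <;> by_cases h0 : (0:ℝ) ∈ T <;>
      simp only [h1, h0, if_true, if_false, Set.union_empty, Set.empty_union,
        Set.union_compl_self, Set.inter_univ, Set.inter_empty, measure_univ, measure_empty,
        mul_one, mul_zero]
    · exact h B hB
    · exact hcompl B hB
  have hgm : Measurable g := measurable_const.indicator hS
  have hmul := hind.integral_mul_eq_mul_integral hX.1 hgm.aestronglyMeasurable
  have hXg : (X * g) = S.indicator X := by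
    funext ω; by_cases hω : ω ∈ S <;> simp [hg, Set.indicator_apply, hω]
  have hgint : ∫ ω, g ω ∂μ = (μ S).toReal := by
    have := integral_indicator_one (μ := μ) hS
    rw [measureReal_def] at this
    exact this
  calc ∫ ω in S, X ω ∂μ = ∫ ω, S.indicator X ω ∂μ := (integral_indicator hS).symm
    _ = ∫ ω, (X * g) ω ∂μ := by rw [hXg]
    _ = (∫ ω, X ω ∂μ) * ∫ ω, g ω ∂μ := hmul
    _ = (∫ ω, X ω ∂μ) * (μ S).toReal := by rw [hgint]

private lemma integral_cond (μ : Measure Ω) (S : Set Ω) (f : Ω → ℝ) :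
    ∫ ω, f ω ∂μ[|S] = (μ S).toReal⁻¹ * ∫ ω in S, f ω ∂μ := by
  show ∫ ω, f ω ∂((μ S)⁻¹ • μ.restrict S) = _
  rw [integral_smul_measure, ENNReal.toReal_inv, smul_eq_mul]

private lemma setIntegral_cond (μ : Measure Ω) {S T : Set Ω} (hT : MeasurableSet T) (f : Ω → ℝ) :
    ∫ ω in T, f ω ∂μ[|S] = (μ S).toReal⁻¹ * ∫ ω in T ∩ S, f ω ∂μ := by
  show ∫ ω in T, f ω ∂((μ S)⁻¹ • μ.restrict S) = _
  rw [Measure.restrict_smul, Measure.restrict_restrict hT, integral_smul_measure,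
    ENNReal.toReal_inv, smul_eq_mul]

private lemma integrable_cond (μ : Measure Ω) (S : Set Ω) {f : Ω → ℝ}
    (hf : Integrable f μ) : Integrable f μ[|S] := by
  rcases eq_or_ne (μ S) 0 with h | h
  · rw [cond_eq_zero_of_meas_eq_zero h]
    exact integrable_zero_measure
  · show Integrable f ((μ S)⁻¹ • μ.restrict S)
    exact (hf.restrict).smul_measure (ENNReal.inv_ne_top.2 h)

private lemma integral_sum_fiber {κ : Type*} [Fintype κ] [MeasurableSpace κ]
    [MeasurableSingletonClass κ] (μ : Measure Ω) {g : Ω → κ} (hg : Measurable g)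
    {f : κ → Ω → ℝ} (hf : ∀ k, Integrable (f k) μ) :
    ∫ ω, f (g ω) ω ∂μ = ∑ k, ∫ ω in {ω | g ω = k}, f k ω ∂μ := by
  classical
  have hpt : ∀ ω, f (g ω) ω = ∑ k, ({ω' | g ω' = k}).indicator (f k) ω := by
    intro ω
    have hz : ∀ b : κ, b ≠ g ω → ({ω' | g ω' = b}).indicator (f b) ω = 0 := by
      intro b hb
      apply Set.indicator_of_notMem
      intro h
      exact hb (Eq.symm h)
    rw [Fintype.sum_eq_single (g ω) hz]
    simp [Set.indicator_apply]
  calc ∫ ω, f (g ω) ω ∂μ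
      = ∫ ω, ∑ k, ({ω' | g ω' = k}).indicator (f k) ω ∂μ :=
        integral_congr_ae (Filter.Eventually.of_forall hpt)
    _ = ∑ k, ∫ ω, ({ω' | g ω' = k}).indicator (f k) ω ∂μ :=
        integral_finset_sum _ (fun k _ => (hf k).indicator (hg (measurableSet_singleton k)))
    _ = ∑ k, ∫ ω in {ω' | g ω' = k}, f k ω ∂μ :=
        Finset.sum_congr rfl fun k _ => integral_indicator (hg (measurableSet_singleton k))

private lemma setIntegral_sum_fiber {κ : Type*} [Fintype κ] [MeasurableSpace κ]
    [MeasurableSingletonClass κ] (μ : Measure Ω) {g : Ω → κ} (hg : Measurable g)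
    {f : Ω → ℝ} (hf : Integrable f μ) {S : Set Ω} (hS : MeasurableSet S) :
    ∫ ω in S, f ω ∂μ = ∑ k, ∫ ω in S ∩ {ω | g ω = k}, f ω ∂μ := by
  have h := integral_sum_fiber (μ.restrict S) hg (f := fun _ => f) (fun _ => hf.restrict)
  refine h.trans (Finset.sum_congr rfl fun k _ => ?_)
  rw [Measure.restrict_restrict
    (show MeasurableSet {ω | g ω = k} from hg (measurableSet_singleton k)),
    Set.inter_comm]

private lemma term_eq (P : Measure Ω) [IsProbabilityMeasure P]
    {X Y : Ω → ℝ} (hXm : Measurable X) (hXint : Integrable X P)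
    {F Gs T : Set Ω} (hFm : MeasurableSet F) (hTm : MeasurableSet T)
    (hGF : Gs = F ∩ T)
    (hYX : ∀ ω ∈ Gs, Y ω = X ω)
    (hci : ∀ B : Set ℝ, MeasurableSet B →
      P[|F] (X ⁻¹' B ∩ T) = P[|F] (X ⁻¹' B) * P[|F] T)
    (hFpos : 0 < P F) (hGpos : 0 < P Gs) :
    ∫ ω, Y ω ∂P[|Gs] = (∫ ω in F, X ω ∂P) * (P F).toReal⁻¹ := by
  have hμF : IsProbabilityMeasure P[|F] := cond_isProbabilityMeasure hFpos.ne'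
  have hXμ : Integrable X P[|F] := integrable_cond P F hXint
  have happly := setIntegral_of_indep P[|F] hXm hXμ hTm hci
  set p : ℝ := (P F).toReal with hp
  set q : ℝ := (P (F ∩ T)).toReal with hq
  have hpne : p ≠ 0 := (ENNReal.toReal_pos hFpos.ne' (measure_ne_top _ _)).ne'
  have hqne : q ≠ 0 := by
    rw [hq, ← hGF]
    exact (ENNReal.toReal_pos hGpos.ne' (measure_ne_top _ _)).ne'
  set a : ℝ := ∫ ω in F ∩ T, X ω ∂P with ha
  set b : ℝ := ∫ ω in F, X ω ∂P with hb
  have h1 : ∫ ω in T, X ω ∂P[|F] = p⁻¹ * a := by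
    rw [setIntegral_cond P hTm X, Set.inter_comm]
  have h2 : ∫ ω, X ω ∂P[|F] = p⁻¹ * b := integral_cond P F X
  have h3 : ((P[|F]) T).toReal = p⁻¹ * q := by
    rw [cond_apply hFm, ENNReal.toReal_mul, ENNReal.toReal_inv]
  have hkey : a = b * q * p⁻¹ := by
    have h4 := happly
    rw [h1, h2, h3] at h4
    have h5 : p * (p⁻¹ * a) = p * (p⁻¹ * b * (p⁻¹ * q)) := by rw [h4]
    rw [← mul_assoc, mul_inv_cancel₀ hpne, one_mul] at h5
    rw [h5]
    field_simp
  have hGm : MeasurableSet Gs := hGF ▸ hFm.inter hTm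
  rw [integral_cond P Gs Y, setIntegral_congr_fun hGm hYX, hGF, ← ha, ← hq, hkey]
  field_simp

end helpers

open MeasureTheory ProbabilityTheory


/-- Identification of the nested potential outcome `E[Y(1, M(0))]` in the two-mediator
model with randomized treatment `A`, mediators `L` and `M`, and unobserved confounding
between `L` and `Y`:
`E[Y(1,M(0))] = Σ_m (Σ_l E[Y | M = m, L = l, A = 1] · P(L = l | A = 1)) · P(M = m | A = 0)`. -/
theorem two_mediator_nested_outcome_identification
    {Ω : Type*} [MeasurableSpace Ω] (P : Measure Ω) [IsProbabilityMeasure P]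
    {SM : Type*} [Fintype SM] [MeasurableSpace SM] [MeasurableSingletonClass SM]
    {SL : Type*} [Fintype SL] [MeasurableSpace SL] [MeasurableSingletonClass SL]
    (A : Ω → Fin 2) (hA : Measurable A)
    (L : Ω → SL) (hL : Measurable L)
    (M : Ω → SM) (hM : Measurable M)
    (Y : Ω → ℝ) (hY : Measurable Y) (hYint : Integrable Y P)
    (M₀ : Ω → SM) (hM₀ : Measurable M₀)
    (L₁ : Ω → SL) (hL₁ : Measurable L₁)
    (Y₁ : SM → Ω → ℝ) (hY₁ : ∀ m, Measurable (Y₁ m)) (hY₁int : ∀ m, Integrable (Y₁ m) P)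
    (hconsM : ∀ ω, A ω = 0 → M ω = M₀ ω)
    (hconsL : ∀ ω, A ω = 1 → L ω = L₁ ω)
    (hconsY : ∀ ω, A ω = 1 → Y ω = Y₁ (M ω) ω)
    (hcross : ∀ m : SM, IndepFun (Y₁ m) M₀ P)
    (hrand : ∀ m : SM, IndepFun (fun ω => (Y₁ m ω, L₁ ω, M₀ ω)) A P)
    (hcondIndep : ∀ (m : SM) (l : SL) (B : Set ℝ), MeasurableSet B → ∀ m' : SM,
      P[|{ω | A ω = 1 ∧ L ω = l}] {ω | Y₁ m ω ∈ B ∧ M ω = m'}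
        = P[|{ω | A ω = 1 ∧ L ω = l}] {ω | Y₁ m ω ∈ B}
          * P[|{ω | A ω = 1 ∧ L ω = l}] {ω | M ω = m'})
    (hpos₀ : 0 < P {ω | A ω = 0})
    (hpos : ∀ (l : SL) (m : SM), 0 < P {ω | A ω = 1 ∧ L ω = l ∧ M ω = m})
    (hNestInt : Integrable (fun ω => Y₁ (M₀ ω) ω) P) :
    ∫ ω, Y₁ (M₀ ω) ω ∂P
      = ∑ m : SM,
          (∑ l : SL,
            (∫ ω, Y ω ∂P[|{ω | M ω = m ∧ L ω = l ∧ A ω = 1}])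
              * (P[|{ω | A ω = 1}] {ω | L ω = l}).toReal)
          * (P[|{ω | A ω = 0}] {ω | M ω = m}).toReal := by
  classical
  have hA1 : MeasurableSet {ω | A ω = 1} := hA (measurableSet_singleton 1)
  have hA0 : MeasurableSet {ω | A ω = 0} := hA (measurableSet_singleton 0)
  have hMm : ∀ m : SM, MeasurableSet {ω | M ω = m} := fun m => hM (measurableSet_singleton m)
  have hM₀m : ∀ m : SM, MeasurableSet {ω | M₀ ω = m} := fun m => hM₀ (measurableSet_singleton m)
  have hLl : ∀ l : SL, MeasurableSet {ω | L ω = l} := fun l => hL (measurableSet_singleton l)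
  have hFm : ∀ l : SL, MeasurableSet {ω | A ω = 1 ∧ L ω = l} := fun l => hA1.inter (hLl l)
  have hne : Nonempty Ω := by
    by_contra h
    rw [not_nonempty_iff] at h
    have h1 : P Set.univ = 1 := measure_univ
    rw [Set.univ_eq_empty_iff.2 h, measure_empty] at h1
    exact zero_ne_one h1
  obtain ⟨ω₀⟩ := hne
  have hFpos : ∀ l, 0 < P {ω | A ω = 1 ∧ L ω = l} := fun l =>
    lt_of_lt_of_le (hpos l (M ω₀)) (measure_mono fun ω h => ⟨h.1, h.2.1⟩)
  have hE1pos : 0 < P {ω | A ω = 1} :=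
    lt_of_lt_of_le (hFpos (L ω₀)) (measure_mono fun ω h => h.1)
  have hGpos : ∀ m l, 0 < P {ω | M ω = m ∧ L ω = l ∧ A ω = 1} := fun m l =>
    lt_of_lt_of_le (hpos l m) (measure_mono fun ω h => ⟨h.2.2, h.2.1, h.1⟩)
  have hYA : ∀ m, IndepFun (Y₁ m) A P := fun m =>
    (hrand m).comp measurable_fst measurable_id
  have hM₀A : IndepFun M₀ A P :=
    (hrand (M ω₀)).comp (measurable_snd.comp measurable_snd) measurable_id
  -- Step A
  have stepA : ∫ ω, Y₁ (M₀ ω) ω ∂P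
      = ∑ m, (∫ ω, Y₁ m ω ∂P) * (P {ω | M₀ ω = m}).toReal := by
    rw [integral_sum_fiber P hM₀ hY₁int]
    refine Finset.sum_congr rfl fun m _ => ?_
    refine setIntegral_of_indep P (hY₁ m) (hY₁int m) (hM₀m m) (fun B hB => ?_)
    exact (hcross m).measure_inter_preimage_eq_mul B {m} hB (measurableSet_singleton m)
  -- Step B
  have stepB : ∀ m : SM,
      (P[|{ω | A ω = 0}] {ω | M ω = m}).toReal = (P {ω | M₀ ω = m}).toReal := by
    intro m
    have hset : {ω | A ω = 0} ∩ {ω | M ω = m} = M₀ ⁻¹' {m} ∩ A ⁻¹' {0} := by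
      ext ω
      simp only [Set.mem_inter_iff, Set.mem_setOf_eq, Set.mem_preimage, Set.mem_singleton_iff]
      constructor
      · rintro ⟨h0, hm⟩; exact ⟨(hconsM ω h0).symm.trans hm, h0⟩
      · rintro ⟨hm, h0⟩; exact ⟨h0, (hconsM ω h0).trans hm⟩
    have hind := hM₀A.measure_inter_preimage_eq_mul {m} {0}
      (measurableSet_singleton m) (measurableSet_singleton 0)
    have hA0' : P (A ⁻¹' {0}) = P {ω | A ω = 0} := rfl
    rw [cond_apply hA0, hset, hind, hA0', mul_comm (P (M₀ ⁻¹' {m})), ← mul_assoc,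
      ENNReal.inv_mul_cancel hpos₀.ne' (measure_ne_top _ _), one_mul]
    rfl
  -- Step C
  have stepC : ∀ m : SM,
      (∑ l : SL, (∫ ω, Y ω ∂P[|{ω | M ω = m ∧ L ω = l ∧ A ω = 1}])
          * (P[|{ω | A ω = 1}] {ω | L ω = l}).toReal)
        = ∫ ω, Y₁ m ω ∂P := by
    intro m
    have pE1ne : (P {ω | A ω = 1}).toReal ≠ 0 :=
      (ENNReal.toReal_pos hE1pos.ne' (measure_ne_top _ _)).ne'
    have key : ∀ l : SL,
        (∫ ω, Y ω ∂P[|{ω | M ω = m ∧ L ω = l ∧ A ω = 1}])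
            * (P[|{ω | A ω = 1}] {ω | L ω = l}).toReal
          = (∫ ω in {ω | A ω = 1 ∧ L ω = l}, Y₁ m ω ∂P) * (P {ω | A ω = 1}).toReal⁻¹ := by
      intro l
      have pFne : (P {ω | A ω = 1 ∧ L ω = l}).toReal ≠ 0 :=
        (ENNReal.toReal_pos (hFpos l).ne' (measure_ne_top _ _)).ne'
      have hGF : {ω | M ω = m ∧ L ω = l ∧ A ω = 1}
          = {ω | A ω = 1 ∧ L ω = l} ∩ {ω | M ω = m} := by
        ext ω
        simp only [Set.mem_inter_iff, Set.mem_setOf_eq]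
        tauto
      have hYX : ∀ ω ∈ {ω | M ω = m ∧ L ω = l ∧ A ω = 1}, Y ω = Y₁ m ω := by
        intro ω hω
        rw [hconsY ω hω.2.2, hω.1]
      have hterm := term_eq P (hY₁ m) (hY₁int m) (hFm l) (hMm m) hGF hYX
        (fun B hB => hcondIndep m l B hB m) (hFpos l) (hGpos m l)
      have hcondL : (P[|{ω | A ω = 1}] {ω | L ω = l}).toReal
          = (P {ω | A ω = 1}).toReal⁻¹ * (P {ω | A ω = 1 ∧ L ω = l}).toReal := by
        rw [cond_apply hA1, ENNReal.toReal_mul, ENNReal.toReal_inv]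
        rfl
      rw [hterm, hcondL]
      field_simp
    calc (∑ l : SL, (∫ ω, Y ω ∂P[|{ω | M ω = m ∧ L ω = l ∧ A ω = 1}])
          * (P[|{ω | A ω = 1}] {ω | L ω = l}).toReal)
        = ∑ l : SL, (∫ ω in {ω | A ω = 1 ∧ L ω = l}, Y₁ m ω ∂P)
            * (P {ω | A ω = 1}).toReal⁻¹ := Finset.sum_congr rfl fun l _ => key l
      _ = (∑ l : SL, ∫ ω in {ω | A ω = 1 ∧ L ω = l}, Y₁ m ω ∂P)
            * (P {ω | A ω = 1}).toReal⁻¹ := (Finset.sum_mul _ _ _).symm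
      _ = (∫ ω in {ω | A ω = 1}, Y₁ m ω ∂P) * (P {ω | A ω = 1}).toReal⁻¹ := by
          congr 1
          exact (setIntegral_sum_fiber P hL (hY₁int m) hA1).symm
      _ = (∫ ω, Y₁ m ω ∂P) * (P {ω | A ω = 1}).toReal * (P {ω | A ω = 1}).toReal⁻¹ := by
          rw [setIntegral_of_indep P (hY₁ m) (hY₁int m) hA1 (fun B hB =>
            (hYA m).measure_inter_preimage_eq_mul B {1} hB (measurableSet_singleton 1))]
      _ = ∫ ω, Y₁ m ω ∂P := by
          field_simp
  rw [stepA]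
  refine Finset.sum_congr rfl fun m _ => ?_
  rw [stepC m, stepB m]
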